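/- For every n ≥ 1, twice the number of finite sequences (α_1, ..., α_r) of positive integers with α_1 + ... + α_r = n for which there exists m with α_1 ≤ ... ≤ α_m > α_{m+1} > ... > α_r equals the number of pairs (λ, μ) where λ is a partition, μ is a partition into distinct parts, and |λ| + |μ| = n (i.e. equals the number of overpartitions of n). -/

import Mathlib

open List

/-- A list `α = (α_1, ..., α_r)` is peak-shaped if there exists `m` with `1 ≤ m ≤ r` such that
`α_1 ≤ ... ≤ α_m > α_{m+1} > ... > α_r`. -/
def PeakShaped (α : List ℕ) : Prop :=
  ∃ m, 1 ≤ m ∧ m ≤ α.length ∧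
    List.Pairwise (· ≤ ·) (α.take m) ∧ List.Pairwise (· > ·) (α.drop (m - 1))

private lemma headI_eq_head' {l : List ℕ} (h : l ≠ []) : l.headI = l.head h := by
  cases l with
  | nil => exact absurd rfl h
  | cons a t => rfl

private lemma headI_reverse_take (α : List ℕ) (k : ℕ) (h1 : 1 ≤ k) (h2 : k ≤ α.length) :
    ((α.take k).reverse).headI = α[k-1]'(by omega) := by
  have hlen : (α.take k).length = k := by simp only [length_take]; omega
  have hne : (α.take k).reverse ≠ [] := by
    have hl2 : (α.take k).reverse.length = k := by rw [length_reverse, hlen]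
    intro h
    rw [h] at hl2
    simp at hl2
    omega
  rw [headI_eq_head' hne, head_reverse, getLast_eq_getElem]
  have e : (α.take k).length - 1 = k - 1 := by rw [hlen]
  simp only [getElem_take]
  congr 1

private lemma headI_drop (α : List ℕ) (k : ℕ) (h : k < α.length) :
    (α.drop k).headI = α[k] := by
  rw [drop_eq_getElem_cons h]; rfl

/-- Uniqueness of the peak index. -/
private lemma peak_unique {α : List ℕ} {m m' : ℕ}
    (h1 : 1 ≤ m) (h2 : m ≤ α.length) (h3 : Pairwise (· ≤ ·) (α.take m))
    (h4 : Pairwise (· > ·) (α.drop (m - 1)))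
    (h1' : 1 ≤ m') (h2' : m' ≤ α.length) (h3' : Pairwise (· ≤ ·) (α.take m'))
    (h4' : Pairwise (· > ·) (α.drop (m' - 1))) : m = m' := by
  by_contra hne
  wlog hlt : m < m' generalizing m m'
  · exact this h1' h2' h3' h4' h1 h2 h3 h4 (Ne.symm hne) (by omega)
  have hm : m < α.length := lt_of_lt_of_le hlt h2'
  -- from h4 : α[m-1] > α[m]
  have hmm : m - 1 + 1 = m := by omega
  have e1 : α.drop (m-1) = α[m-1]'(by omega) :: α.drop m := by
    rw [drop_eq_getElem_cons (show m - 1 < α.length by omega)]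
    congr 1
    rw [hmm]
  rw [e1, pairwise_cons] at h4
  have hmem : α[m]'hm ∈ α.drop m := by
    rw [drop_eq_getElem_cons hm]; exact mem_cons_self
  have hgt : α[m-1]'(by omega) > α[m]'hm := h4.1 _ hmem
  -- from h3' : α[m-1] ≤ α[m]
  have hlen' : (α.take m').length = m' := by simp [length_take]; omega
  have hle : α[m-1]'(by omega) ≤ α[m]'hm := by
    have := h3'.rel_get_of_lt (a := ⟨m-1, by omega⟩) (b := ⟨m, by omega⟩)
      (by simp [Fin.lt_def]; omega)
    simpa [List.get_eq_getElem, List.getElem_take] using this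
  omega

/-- The peak position spec for case A : `l` nonempty, head of `l` bigger than head of `μ`. -/
private lemma specA (l μ : List ℕ) (hl : Pairwise (· ≥ ·) l) (hμ : Pairwise (· > ·) μ)
    (hne : l ≠ []) (hC : μ.headI < l.headI) :
    1 ≤ l.length ∧ l.length ≤ (l.reverse ++ μ).length ∧
      Pairwise (· ≤ ·) ((l.reverse ++ μ).take l.length) ∧
      Pairwise (· > ·) ((l.reverse ++ μ).drop (l.length - 1)) := by
  obtain ⟨a, t, rfl⟩ := List.exists_cons_of_ne_nil hne
  have hlen : (1 : ℕ) ≤ (a :: t).length := by simp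
  refine ⟨hlen, by simp, ?_, ?_⟩
  · have : (a :: t).length = (a :: t).reverse.length := length_reverse.symm
    rw [this, take_left]
    rw [show Pairwise (· ≤ ·) (a :: t).reverse ↔ Pairwise (· ≤ ·) (a :: t).reverse from Iff.rfl,
      pairwise_reverse]
    exact hl.imp fun h => h
  · have e : (a :: t).reverse ++ μ = t.reverse ++ (a :: μ) := by
      simp [reverse_cons, append_assoc]
    have e2 : (a :: t).length - 1 = t.reverse.length := by simp
    rw [e, e2, drop_left]
    rw [pairwise_cons]
    refine ⟨fun b hb => ?_, hμ⟩
    rcases μ with _ | ⟨c, s⟩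
    · simp at hb
    · rcases mem_cons.mp hb with rfl | hb'
      · simpa using hC
      · have : c > b := (pairwise_cons.mp hμ).1 b hb'
        have : b < c := this
        simp only [headI_cons] at hC
        omega

/-- The peak position spec for case B : `μ` nonempty, head of `l` at most head of `μ`. -/
private lemma specB (l μ : List ℕ) (hl : Pairwise (· ≥ ·) l) (hμ : Pairwise (· > ·) μ)
    (hμne : μ ≠ []) (hC : l.headI ≤ μ.headI) :
    1 ≤ l.length + 1 ∧ l.length + 1 ≤ (l.reverse ++ μ).length ∧
      Pairwise (· ≤ ·) ((l.reverse ++ μ).take (l.length + 1)) ∧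
      Pairwise (· > ·) ((l.reverse ++ μ).drop (l.length + 1 - 1)) := by
  obtain ⟨c, s, rfl⟩ := List.exists_cons_of_ne_nil hμne
  refine ⟨by omega, by simp only [length_append, length_reverse, length_cons]; omega, ?_, ?_⟩
  · have e : l.reverse ++ c :: s = (l.reverse ++ [c]) ++ s := by simp [append_assoc]
    have e2 : l.length + 1 = (l.reverse ++ [c]).length := by simp
    rw [e, e2, take_left]
    have e3 : l.reverse ++ [c] = (c :: l).reverse := by simp [reverse_cons]
    rw [e3]
    rw [show Pairwise (· ≤ ·) (c :: l).reverse ↔ Pairwise (· ≤ ·) (c :: l).reverse from Iff.rfl,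
      pairwise_reverse]
    rw [show Pairwise (fun a b => b ≤ a) (c :: l) ↔ Pairwise (· ≥ ·) (c :: l) from Iff.rfl,
      pairwise_cons]
    refine ⟨fun b hb => ?_, hl⟩
    rcases l with _ | ⟨a, t⟩
    · simp at hb
    · simp only [headI_cons] at hC
      rcases mem_cons.mp hb with rfl | hb'
      · exact hC
      · have : a ≥ b := (pairwise_cons.mp hl).1 b hb'
        omega
  · have e2 : l.length + 1 - 1 = l.reverse.length := by simp
    rw [e2, drop_left]
    exact hμ

/-- Twice the number of peak-shaped compositions of `n` equals the number of overpartitions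
of `n`, i.e. of pairs `(λ, μ)` with `λ` a partition, `μ` a partition into distinct parts, and
`|λ| + |μ| = n`. -/
theorem two_mul_card_peak_eq_card_overpartitions (n : ℕ) (hn : 1 ≤ n) :
    2 * Nat.card {α : List ℕ // (∀ x ∈ α, 0 < x) ∧ α.sum = n ∧ PeakShaped α}
      = Nat.card {p : List ℕ × List ℕ //
          (∀ x ∈ p.1, 0 < x) ∧ (∀ x ∈ p.2, 0 < x) ∧
          List.Pairwise (· ≥ ·) p.1 ∧ List.Pairwise (· > ·) p.2 ∧
          p.1.sum + p.2.sum = n} := by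
  have h2 : (2 : ℕ) = Nat.card Bool := by simp
  rw [h2, ← Nat.card_prod]
  apply Nat.card_congr
  -- forward map helper
  refine
    { toFun := fun x =>
        ⟨(((x.2 : List ℕ).take
            (if x.1 then x.2.prop.2.2.choose - 1 else x.2.prop.2.2.choose)).reverse,
          (x.2 : List ℕ).drop
            (if x.1 then x.2.prop.2.2.choose - 1 else x.2.prop.2.2.choose)), ?_⟩
      invFun := fun p =>
        (decide ((p : List ℕ × List ℕ).1.headI ≤ (p : List ℕ × List ℕ).2.headI),
          ⟨(p : List ℕ × List ℕ).1.reverse ++ (p : List ℕ × List ℕ).2, ?_⟩)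
      left_inv := ?_
      right_inv := ?_ }
  · -- membership of the forward image
    obtain ⟨b, α, hpos, hsum, hpk⟩ := x
    obtain ⟨hm1, hm2, hm3, hm4⟩ := hpk.choose_spec
    set m := hpk.choose with hmdef
    set k := if b then m - 1 else m with hkdef
    have hk1 : k ≤ m := by rcases b <;> simp [hkdef]
    have hk2 : m - 1 ≤ k := by rcases b <;> simp [hkdef]
    refine ⟨?_, ?_, ?_, ?_, ?_⟩
    · intro x hx
      exact hpos x (mem_of_mem_take (mem_reverse.mp hx))
    · intro x hx
      exact hpos x (mem_of_mem_drop hx)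
    · have e : α.take k = (α.take m).take k := by rw [take_take]; congr 1; omega
      rw [e]
      rw [show Pairwise (· ≥ ·) ((α.take m).take k).reverse ↔
        Pairwise (· ≥ ·) ((α.take m).take k).reverse from Iff.rfl, pairwise_reverse]
      exact (hm3.take (i := k)).imp fun h => h
    · have e : α.drop k = (α.drop (m - 1)).drop (k - (m - 1)) := by
        rw [drop_drop]; congr 1; omega
      rw [e]
      exact hm4.drop (i := k - (m-1))
    · simp only [sum_reverse]
      rw [sum_take_add_sum_drop, hsum]
  · -- membership of the backward image
    obtain ⟨⟨l, μ⟩, hp1, hp2, hp3, hp4, hp5⟩ := p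
    simp only at hp1 hp2 hp3 hp4 hp5 ⊢
    have hposmem : ∀ x ∈ l.reverse ++ μ, 0 < x := by
      intro x hx
      rcases mem_append.mp hx with h | h
      · exact hp1 x (mem_reverse.mp h)
      · exact hp2 x h
    refine ⟨hposmem, by rw [sum_append, sum_reverse]; exact hp5, ?_⟩
    by_cases hC : μ.headI < l.headI
    · have hne : l ≠ [] := by
        intro h
        rw [h] at hC
        simp at hC
      exact ⟨l.length, specA l μ hp3 hp4 hne hC⟩
    · push_neg at hC
      have hμne : μ ≠ [] := by
        intro h
        subst h
        -- then l ≠ [] since sum = n ≥ 1, and l.headI > 0, contradicting hC : l.headI ≤ 0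
        have hlne : l ≠ [] := by
          intro h'
          rw [h'] at hp5
          simp at hp5
          omega
        have : l.headI ∈ l := by
          rw [headI_eq_head' hlne]; exact head_mem hlne
        have := hp1 _ this
        simp at hC
        omega
      exact ⟨l.length + 1, specB l μ hp3 hp4 hμne hC⟩
  · -- left inverse
    rintro ⟨b, α, hpos, hsum, hpk⟩
    obtain ⟨hm1, hm2, hm3, hm4⟩ := hpk.choose_spec
    set m := hpk.choose with hmdef
    refine Prod.ext ?_ (Subtype.ext ?_)
    · -- the boolean component
      rcases b with _ | _
      · -- b = false, k = m : need ¬ (l.headI ≤ μ.headI)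
        show (decide (((α.take m).reverse).headI ≤ (α.drop m).headI)) = false
        have hhl : ((α.take m).reverse).headI = α[m-1]'(by omega) :=
          headI_reverse_take α m hm1 hm2
        rw [decide_eq_false_iff_not]
        intro hle
        rw [hhl] at hle
        rcases lt_or_eq_of_le hm2 with hlt | heq
        · -- μ = drop m nonempty with head α[m]
          rw [headI_drop α m hlt] at hle
          -- but h4 gives α[m-1] > α[m]
          have hmm : m - 1 + 1 = m := by omega
          have e1 : α.drop (m-1) = α[m-1]'(by omega) :: α.drop m := by
            rw [drop_eq_getElem_cons (show m - 1 < α.length by omega)]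
            congr 1
            rw [hmm]
          rw [e1, pairwise_cons] at hm4
          have hmem : α[m]'hlt ∈ α.drop m := by
            rw [drop_eq_getElem_cons hlt]; exact mem_cons_self
          have := hm4.1 _ hmem
          omega
        · -- μ empty, headI = 0, but α[m-1] > 0
          rw [show α.drop m = [] from by rw [heq]; exact drop_length] at hle
          simp at hle
          have : α[m-1]'(by omega) ∈ α := getElem_mem _
          have := hpos _ this
          omega
      · -- b = true, k = m - 1 : need l.headI ≤ μ.headI
        show (decide (((α.take (m-1)).reverse).headI ≤ (α.drop (m-1)).headI)) = true
        have hklt : m - 1 < α.length := by omega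
        rw [decide_eq_true_eq]
        rw [headI_drop α (m-1) hklt]
        rcases Nat.eq_or_lt_of_le hm1 with h1 | h1
        · -- m = 1 : take 0 = [], headI = 0
          simp only [show m - 1 = 0 from by omega, take_zero, reverse_nil, headI_nil]
          exact Nat.zero_le _
        · -- m ≥ 2
          rw [headI_reverse_take α (m-1) (by omega) (by omega)]
          -- α[m-2] ≤ α[m-1] from hm3 (take m sorted)
          have hlen' : (α.take m).length = m := by simp [length_take]; omega
          have := hm3.rel_get_of_lt (a := ⟨m-1-1, by omega⟩) (b := ⟨m-1, by omega⟩)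
            (by simp [Fin.lt_def]; omega)
          simpa [List.get_eq_getElem, List.getElem_take] using this
    · -- the list component
      show (α.take (if b then m - 1 else m)).reverse.reverse ++
          α.drop (if b then m - 1 else m) = α
      rw [reverse_reverse, take_append_drop]
  · -- right inverse
    rintro ⟨⟨l, μ⟩, hp1, hp2, hp3, hp4, hp5⟩
    simp only at hp1 hp2 hp3 hp4 hp5
    -- the peak-shaped proof produced by invFun; its choose equals l.length or l.length+1
    apply Subtype.ext
    simp only
    -- Let hpk be the PeakShaped proof of l.reverse ++ μ
    set α := l.reverse ++ μ with hα
    -- we must compute: take k reversed = l and drop k = μ where k = if b then m-1 else m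
    by_cases hC : μ.headI < l.headI
    · -- b = decide (l.headI ≤ μ.headI) = false
      have hb : decide (l.headI ≤ μ.headI) = false := by
        rw [decide_eq_false_iff_not]; omega
      have hne : l ≠ [] := by
        intro h; rw [h] at hC; simp at hC
      have hspec := specA l μ hp3 hp4 hne hC
      -- choose = l.length by uniqueness
      have hex : PeakShaped α := ⟨l.length, hspec⟩
      have huniq : ∀ (h : PeakShaped α), h.choose = l.length := by
        intro h
        obtain ⟨a1, a2, a3, a4⟩ := h.choose_spec
        exact peak_unique a1 a2 a3 a4 hspec.1 hspec.2.1 hspec.2.2.1 hspec.2.2.2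
      rw [hb]
      simp only [Bool.false_eq_true, if_false]
      rw [huniq]
      have e1 : α.take l.length = l.reverse := by
        rw [hα, show l.length = l.reverse.length from length_reverse.symm, take_left]
      have e2 : α.drop l.length = μ := by
        rw [hα, show l.length = l.reverse.length from length_reverse.symm, drop_left]
      rw [e1, e2, reverse_reverse]
    · push_neg at hC
      have hb : decide (l.headI ≤ μ.headI) = true := by rw [decide_eq_true_eq]; exact hC
      have hμne : μ ≠ [] := by
        intro h
        subst h
        have hlne : l ≠ [] := by
          intro h'
          rw [h'] at hp5
          simp at hp5
          omega
        have : l.headI ∈ l := by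
          rw [headI_eq_head' hlne]; exact head_mem hlne
        have := hp1 _ this
        simp at hC
        omega
      have hspec := specB l μ hp3 hp4 hμne hC
      have hex : PeakShaped α := ⟨l.length + 1, hspec⟩
      have huniq : ∀ (h : PeakShaped α), h.choose = l.length + 1 := by
        intro h
        obtain ⟨a1, a2, a3, a4⟩ := h.choose_spec
        exact peak_unique a1 a2 a3 a4 hspec.1 hspec.2.1 hspec.2.2.1 hspec.2.2.2
      rw [hb]
      simp only [if_true]
      rw [huniq]
      have e0 : l.length + 1 - 1 = l.length := by omega
      rw [e0]
      have e1 : α.take l.length = l.reverse := by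
        rw [hα, show l.length = l.reverse.length from length_reverse.symm, take_left]
      have e2 : α.drop l.length = μ := by
        rw [hα, show l.length = l.reverse.length from length_reverse.symm, drop_left]
      rw [e1, e2, reverse_reverse]
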